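/- In F2[t_1, ..., t_6] with the Steenrod algebra action, the cohit space QP_3^{⊗6} (degree-3 homogeneous polynomials modulo hit elements) has dimension 41 over F2. -/

import Mathlib

open MvPolynomial

/-- The total Steenrod square on `F2[t_1,…,t_h]`: the algebra endomorphism `t_j ↦ t_j + t_j^2`.
Its degree-`(m+k)` homogeneous component on a degree-`m` homogeneous polynomial is `Sq^k`,
which on monomials agrees with the Cartan formula and `Sq^k(t_j^m) = C(m,k) t_j^{m+k}` mod 2. -/
noncomputable def sqT (h : ℕ) :
    MvPolynomial (Fin h) (ZMod 2) →ₐ[ZMod 2] MvPolynomial (Fin h) (ZMod 2) :=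
  aeval (fun j => X j + X j ^ 2)

/-- The hit subspace in degree `n`: the span of all `Sq^k f` with `1 ≤ k ≤ n` and
`f` homogeneous of degree `n − k` (i.e. the degree-`n` component of the total square of `f`). -/
noncomputable def hitSub (h n : ℕ) : Submodule (ZMod 2) (MvPolynomial (Fin h) (ZMod 2)) :=
  Submodule.span (ZMod 2)
    {g | ∃ k f, 1 ≤ k ∧ k ≤ n ∧ MvPolynomial.IsHomogeneous f (n - k) ∧
      g = MvPolynomial.homogeneousComponent n (sqT h f)}

/-- The cohit space `QP_n^{⊗h}`: degree-`n` homogeneous polynomials modulo hit elements. -/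
abbrev QP (h n : ℕ) :=
  ↥(homogeneousSubmodule (Fin h) (ZMod 2) n) ⧸
    ((hitSub h n).comap (homogeneousSubmodule (Fin h) (ZMod 2) n).subtype)

namespace QPaux

open Finsupp

abbrev P6 := MvPolynomial (Fin 6) (ZMod 2)

/-! ### Elementary facts about `Finsupp.degree` and classification of exponents -/

lemma degree_single (i : Fin 6) (k : ℕ) : (Finsupp.single i k).degree = k := by
  rw [degree_eq_weight_one]
  simp [weight_apply, Finsupp.sum_single_index]

lemma degree_add (a b : Fin 6 →₀ ℕ) : (a + b).degree = a.degree + b.degree := by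
  rw [degree_eq_weight_one]; exact map_add _ a b

lemma classify_succ {m : ℕ} (d : Fin 6 →₀ ℕ) (h : d.degree = m + 1) :
    ∃ (i : Fin 6) (d' : Fin 6 →₀ ℕ), d = Finsupp.single i 1 + d' ∧ d'.degree = m := by
  have hne : d ≠ 0 := by
    rintro rfl
    rw [map_zero] at h
    omega
  obtain ⟨i, hi⟩ : ∃ i, d i ≠ 0 := by
    by_contra hc
    push_neg at hc
    exact hne (Finsupp.ext hc)
  have hd : d = Finsupp.single i 1 + (d - Finsupp.single i 1) := by
    ext x
    rcases eq_or_ne i x with rfl | hx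
    · simp only [Finsupp.add_apply, Finsupp.tsub_apply, Finsupp.single_eq_same]
      omega
    · simp only [Finsupp.add_apply, Finsupp.tsub_apply, Finsupp.single_eq_of_ne' hx]
      omega
  refine ⟨i, d - Finsupp.single i 1, hd, ?_⟩
  rw [hd, degree_add, degree_single] at h
  omega

lemma classify0 (d : Fin 6 →₀ ℕ) (h : d.degree = 0) : d = 0 :=
  (Finsupp.degree_eq_zero_iff d).mp h

lemma classify1 (d : Fin 6 →₀ ℕ) (h : d.degree = 1) :
    ∃ i, d = Finsupp.single i 1 := by
  obtain ⟨i, d', rfl, h0⟩ := classify_succ d h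
  exact ⟨i, by rw [classify0 d' h0, add_zero]⟩

lemma classify2 (d : Fin 6 →₀ ℕ) (h : d.degree = 2) :
    ∃ i j, d = Finsupp.single i 1 + Finsupp.single j 1 := by
  obtain ⟨i, d', rfl, h1⟩ := classify_succ d h
  obtain ⟨j, rfl⟩ := classify1 d' h1
  exact ⟨i, j, rfl⟩

lemma classify3 (d : Fin 6 →₀ ℕ) (h : d.degree = 3) :
    ∃ i j k, d = Finsupp.single i 1 + Finsupp.single j 1 + Finsupp.single k 1 := by
  obtain ⟨i, d', rfl, h2⟩ := classify_succ d h
  obtain ⟨j, k, rfl⟩ := classify2 d' h2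
  exact ⟨i, j, k, (add_assoc _ _ _).symm⟩

/-! ### The exponent involution `rmap` -/

/-- `d` is a "bad" exponent: `t_i t_j^2` with `j < i`. -/
def badP (d : Fin 6 →₀ ℕ) : Prop :=
  ∃ p : Fin 6 × Fin 6, p.2 < p.1 ∧ d = Finsupp.single p.1 1 + Finsupp.single p.2 2

lemma pair_apply (i j x : Fin 6) (a b : ℕ) :
    (Finsupp.single i a + Finsupp.single j b) x
      = (if i = x then a else 0) + (if j = x then b else 0) := by
  simp [Finsupp.single_apply]

lemma single12_inj {i j i' j' : Fin 6} (hij : i ≠ j) (hij' : i' ≠ j')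
    (h : Finsupp.single i 1 + Finsupp.single j 2
       = Finsupp.single i' 1 + Finsupp.single j' 2) : i = i' ∧ j = j' := by
  have hx : ∀ x, (if i = x then 1 else 0) + (if j = x then 2 else 0)
      = (if i' = x then 1 else 0) + (if j' = x then 2 else 0) := by
    intro x
    rw [← pair_apply, ← pair_apply, h]
  constructor
  · have h1 := hx i
    have h2 := hx i'
    split_ifs at h1 h2 <;> omega
  · have h1 := hx j
    have h2 := hx j'
    split_ifs at h1 h2 <;> omega

open Classical in
noncomputable def rmap (d : Fin 6 →₀ ℕ) : Fin 6 →₀ ℕ :=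
  if h : badP d then Finsupp.single h.choose.2 1 + Finsupp.single h.choose.1 2 else d

lemma rmap_fix {d : Fin 6 →₀ ℕ} (h : ¬ badP d) : rmap d = d := by
  rw [rmap, dif_neg h]

lemma rmap_bad {i j : Fin 6} (h : j < i) :
    rmap (Finsupp.single i 1 + Finsupp.single j 2)
      = Finsupp.single j 1 + Finsupp.single i 2 := by
  have hb : badP (Finsupp.single i 1 + Finsupp.single j 2) := ⟨(i, j), h, rfl⟩
  rw [rmap, dif_pos hb]
  obtain ⟨hlt, heq⟩ := hb.choose_spec
  obtain ⟨h1, h2⟩ := single12_inj (ne_of_gt h) (ne_of_gt hlt) heq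
  rw [← h1, ← h2]

lemma not_bad_single3 (i : Fin 6) : ¬ badP (Finsupp.single i 3) := by
  rintro ⟨⟨a, b⟩, hba, he⟩
  have hne : a ≠ b := ne_of_gt hba
  have := congrArg (fun f => f b) he
  simp only [pair_apply, Finsupp.single_apply] at this
  rw [if_neg hne] at this
  split_ifs at this <;> omega

lemma not_bad_good {i j : Fin 6} (h : i < j) :
    ¬ badP (Finsupp.single i 1 + Finsupp.single j 2) := by
  rintro ⟨⟨a, b⟩, hba, he⟩
  obtain ⟨h1, h2⟩ := single12_inj (ne_of_lt h) (ne_of_gt hba) he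
  omega

lemma not_bad_triple {i j k : Fin 6} (hij : i ≠ j) (hjk : j ≠ k) (hik : i ≠ k) :
    ¬ badP (Finsupp.single i 1 + Finsupp.single j 1 + Finsupp.single k 1) := by
  rintro ⟨⟨a, b⟩, hba, he⟩
  have hne : a ≠ b := ne_of_gt hba
  have := congrArg (fun f => f b) he
  simp only [Finsupp.add_apply, Finsupp.single_apply] at this
  rw [if_neg hne] at this
  split_ifs at this <;> omega

/-! ### The span `Wsub` of the hit generators -/

noncomputable def Wsub : Submodule (ZMod 2) P6 :=
  Submodule.span (ZMod 2) {g | ∃ i j : Fin 6, g = X i * X j ^ 2 + X i ^ 2 * X j}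

lemma hcomp_of {n m : ℕ} {p : P6} (hp : p.IsHomogeneous m) :
    homogeneousComponent n p = if n = m then p else 0 :=
  homogeneousComponent_of_mem ((mem_homogeneousSubmodule _ _).mpr hp)

lemma homX2 (i : Fin 6) : (X i ^ 2 : P6).IsHomogeneous 2 := by
  simpa using (isHomogeneous_X (ZMod 2) i).pow 2

lemma hc3_key (i j : Fin 6) :
    homogeneousComponent 3 ((X i + X i ^ 2) * (X j + X j ^ 2) : P6)
      = X i * X j ^ 2 + X i ^ 2 * X j := by
  have e : ((X i + X i ^ 2) * (X j + X j ^ 2) : P6)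
      = X i * X j + (X i * X j ^ 2 + X i ^ 2 * X j + X i ^ 2 * X j ^ 2) := by ring
  rw [e, map_add, map_add, map_add]
  rw [hcomp_of (n := 3) (by simpa using (isHomogeneous_X (ZMod 2) i).mul (isHomogeneous_X (ZMod 2) j)),
    hcomp_of (n := 3) (by simpa using (isHomogeneous_X (ZMod 2) i).mul (homX2 j)),
    hcomp_of (n := 3) (by simpa using (homX2 i).mul (isHomogeneous_X (ZMod 2) j)),
    hcomp_of (n := 3) (by simpa using (homX2 i).mul (homX2 j))]
  norm_num

lemma monomial_single_one' (j : Fin 6) (c : ZMod 2) :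
    (monomial (Finsupp.single j 1) c : P6) = X j * C c := by
  rw [show Finsupp.single j 1 = Finsupp.single j 1 + 0 from (add_zero _).symm,
    monomial_single_add, monomial_zero', pow_one]

lemma sqT_X (i : Fin 6) : sqT 6 (X i) = X i + X i ^ 2 := by
  simp [sqT]

lemma sqT_C (c : ZMod 2) : sqT 6 (C c) = C c := by
  simp [sqT]

lemma hit_le_W : hitSub 6 3 ≤ Wsub := by
  rw [hitSub]
  apply Submodule.span_le.mpr
  rintro g ⟨k, f, hk1, hk3, hf, rfl⟩
  have expand : (homogeneousComponent 3) (sqT 6 f)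
      = ∑ d ∈ f.support, (homogeneousComponent 3) (sqT 6 (monomial d (coeff d f))) := by
    conv_lhs => rw [as_sum f]
    rw [map_sum, map_sum]
  rw [expand]
  apply Submodule.sum_mem
  intro d hd
  have hdeg : d.degree = (3 - k) := by
    rw [degree_eq_weight_one]
    exact hf (MvPolynomial.mem_support_iff.mp hd)
  set c := coeff d f with hc
  interval_cases k
  · -- k = 1, degree 2
    obtain ⟨i, j, rfl⟩ := classify2 d hdeg
    rw [monomial_single_add, pow_one, monomial_single_one', map_mul (sqT 6), map_mul (sqT 6), sqT_X, sqT_X, sqT_C]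
    rw [show ((X i + X i ^ 2) * ((X j + X j ^ 2) * C c) : P6)
        = C c * ((X i + X i ^ 2) * (X j + X j ^ 2)) from by ring]
    rw [homogeneousComponent_C_mul, hc3_key, ← smul_eq_C_mul]
    exact Submodule.smul_mem _ _ (Submodule.subset_span ⟨i, j, rfl⟩)
  · -- k = 2, degree 1
    obtain ⟨i, rfl⟩ := classify1 d hdeg
    rw [monomial_single_one', map_mul (sqT 6), sqT_X, sqT_C]
    rw [show (((X i + X i ^ 2)) * C c : P6) = C c * (X i + X i ^ 2) from by ring]
    rw [homogeneousComponent_C_mul, map_add]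
    rw [hcomp_of (n := 3) (isHomogeneous_X (ZMod 2) i), hcomp_of (n := 3) (homX2 i)]
    norm_num
  · -- k = 3, degree 0
    rw [classify0 d hdeg, monomial_zero', sqT_C]
    rw [hcomp_of (n := 3) (isHomogeneous_C (Fin 6) c)]
    norm_num

lemma W_le_hit : Wsub ≤ hitSub 6 3 := by
  apply Submodule.span_le.mpr
  rintro g ⟨i, j, rfl⟩
  rcases eq_or_ne i j with rfl | hij
  · have h0 : (X i * X i ^ 2 + X i ^ 2 * X i : P6) = X i ^ 3 + X i ^ 3 := by ring
    rw [h0, CharTwo.add_self_eq_zero]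
    exact Submodule.zero_mem _
  · apply Submodule.subset_span
    refine ⟨1, X i * X j, le_refl _, by norm_num, by simpa using (isHomogeneous_X (ZMod 2) i).mul (isHomogeneous_X (ZMod 2) j), ?_⟩
    rw [map_mul, sqT_X, sqT_X, hc3_key]

lemma hit_eq_W : hitSub 6 3 = Wsub := le_antisymm hit_le_W W_le_hit

/-! ### The reduction map `rho` -/

noncomputable def rho : P6 →ₗ[ZMod 2] P6 := AddMonoidAlgebra.mapDomainLinearMap (ZMod 2) (ZMod 2) rmap

lemma rho_monomial (d : Fin 6 →₀ ℕ) (c : ZMod 2) :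
    rho (monomial d c) = monomial (rmap d) c := by
  rw [← single_eq_monomial, ← single_eq_monomial]
  exact AddMonoidAlgebra.mapDomainLinearMap_single _ _ _

lemma rho_as_sum (p : P6) : rho p = ∑ d ∈ p.support, monomial (rmap d) (coeff d p) := by
  conv_lhs => rw [as_sum p]
  rw [map_sum]
  exact Finset.sum_congr rfl fun d _ => rho_monomial d _

/-! ### The index type of the 41 basis monomials -/

abbrev Idx := Fin 6 ⊕ ({p : Fin 6 × Fin 6 // p.1 < p.2} ⊕ {s : Finset (Fin 6) // s.card = 3})

noncomputable def mu : Idx → (Fin 6 →₀ ℕ)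
  | Sum.inl i => Finsupp.single i 3
  | Sum.inr (Sum.inl p) => Finsupp.single p.1.1 1 + Finsupp.single p.1.2 2
  | Sum.inr (Sum.inr s) => ∑ i ∈ s.1, Finsupp.single i 1

lemma triple_apply (s : Finset (Fin 6)) (x : Fin 6) :
    (∑ i ∈ s, Finsupp.single i 1 : Fin 6 →₀ ℕ) x = if x ∈ s then 1 else 0 := by
  rw [Finset.sum_apply']
  simp only [Finsupp.single_apply]
  exact Finset.sum_ite_eq' s x fun _ => 1

lemma degree_tripleSum (s : Finset (Fin 6)) :
    (∑ i ∈ s, Finsupp.single i 1 : Fin 6 →₀ ℕ).degree = s.card := by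
  rw [degree_eq_weight_one, map_sum]
  rw [Finset.sum_congr rfl fun i _ => show (weight fun _ => 1) (Finsupp.single i 1 : Fin 6 →₀ ℕ) = 1 by
    rw [← degree_eq_weight_one]; exact degree_single i 1]
  simp

lemma mu_degree (x : Idx) : (mu x).degree = 3 := by
  rcases x with i | p | s
  · exact degree_single i 3
  · rw [mu, degree_add, degree_single, degree_single]
  · rw [mu, degree_tripleSum, s.2]

lemma not_bad_tripleSum (s : Finset (Fin 6)) : ¬ badP (∑ i ∈ s, Finsupp.single i 1) := by
  rintro ⟨⟨a, b⟩, hba, he⟩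
  have hne : a ≠ b := ne_of_gt hba
  have h1 := congrArg (fun f => f b) he
  simp only [triple_apply, pair_apply] at h1
  rw [if_neg hne] at h1
  split_ifs at h1 <;> omega

lemma rmap_mu (x : Idx) : rmap (mu x) = mu x := by
  rcases x with i | p | s
  · exact rmap_fix (not_bad_single3 i)
  · exact rmap_fix (not_bad_good p.2)
  · exact rmap_fix (not_bad_tripleSum s.1)

lemma mu_inj : Function.Injective mu := by
  rintro (i | ⟨⟨⟨a, b⟩, hab⟩ | ⟨s, hs⟩⟩) (i' | ⟨⟨⟨a', b'⟩, hab'⟩ | ⟨s', hs'⟩⟩) h <;>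
    simp only [mu] at h
  · rw [Finsupp.single_left_injective (by norm_num) h]
  · exfalso
    have hne : a' ≠ b' := ne_of_lt hab'
    have h1 := congrArg (fun f => f b') h
    simp only [Finsupp.single_apply, pair_apply] at h1
    rw [if_neg hne] at h1
    split_ifs at h1 <;> omega
  · exfalso
    have h1 := congrArg (fun f => f i) h
    simp only [Finsupp.single_apply, triple_apply, if_pos rfl] at h1
    split_ifs at h1 <;> omega
  · exfalso
    have hne : a ≠ b := ne_of_lt hab
    have h1 := congrArg (fun f => f b) h
    simp only [Finsupp.single_apply, pair_apply] at h1
    rw [if_neg hne] at h1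
    split_ifs at h1 <;> omega
  · obtain ⟨h1, h2⟩ := single12_inj (ne_of_lt hab) (ne_of_lt hab') h
    subst h1; subst h2; rfl
  · exfalso
    have hne : a ≠ b := ne_of_lt hab
    have h1 := congrArg (fun f => f b) h
    simp only [pair_apply, triple_apply] at h1
    rw [if_neg hne] at h1
    split_ifs at h1 <;> omega
  · exfalso
    have h1 := congrArg (fun f => f i') h
    simp only [Finsupp.single_apply, triple_apply, if_pos rfl] at h1
    split_ifs at h1 <;> omega
  · exfalso
    have hne : a' ≠ b' := ne_of_lt hab'
    have h1 := congrArg (fun f => f b') h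
    simp only [pair_apply, triple_apply] at h1
    rw [if_neg hne] at h1
    split_ifs at h1 <;> omega
  · have hss : s = s' := by
      ext x
      have h1 := congrArg (fun f => f x) h
      simp only [triple_apply] at h1
      split_ifs at h1 <;> simp_all
    subst hss; rfl

/-! ### Key classification: the image of `rmap` on degree-3 exponents -/

lemma key_pair {a b : Fin 6} (hab : a ≠ b) :
    ((monomial (Finsupp.single a 1 + Finsupp.single b 2) 1
      + monomial (rmap (Finsupp.single a 1 + Finsupp.single b 2)) 1 : P6) ∈ Wsub)
    ∧ ∃ x : Idx, rmap (Finsupp.single a 1 + Finsupp.single b 2) = mu x := by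
  rcases lt_or_gt_of_ne hab with h | h
  · rw [rmap_fix (not_bad_good h)]
    exact ⟨by rw [CharTwo.add_self_eq_zero]; exact zero_mem _,
      ⟨Sum.inr (Sum.inl ⟨(a, b), h⟩), rfl⟩⟩
  · rw [rmap_bad h]
    constructor
    · have e1 : (monomial (Finsupp.single a 1 + Finsupp.single b 2) 1 : P6) = X a * X b ^ 2 := by
        rw [monomial_single_add, pow_one, ← X_pow_eq_monomial]
      have e2 : (monomial (Finsupp.single b 1 + Finsupp.single a 2) 1 : P6) = X a ^ 2 * X b := by
        rw [monomial_single_add, pow_one, ← X_pow_eq_monomial]; ring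
      rw [e1, e2]
      exact Submodule.subset_span ⟨a, b, rfl⟩
    · exact ⟨Sum.inr (Sum.inl ⟨(b, a), h⟩), rfl⟩

lemma key_d (d : Fin 6 →₀ ℕ) (hd : d.degree = 3) :
    ((monomial d 1 + monomial (rmap d) 1 : P6) ∈ Wsub) ∧ ∃ x : Idx, rmap d = mu x := by
  obtain ⟨i, j, k, rfl⟩ := classify3 d hd
  by_cases hij : i = j
  · subst hij
    by_cases hik : i = k
    · subst hik
      have e : Finsupp.single i 1 + Finsupp.single i 1 + Finsupp.single i 1
          = Finsupp.single i 3 := by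
        rw [← Finsupp.single_add, ← Finsupp.single_add]
      rw [e, rmap_fix (not_bad_single3 i)]
      exact ⟨by rw [CharTwo.add_self_eq_zero]; exact zero_mem _, ⟨Sum.inl i, rfl⟩⟩
    · have e : Finsupp.single i 1 + Finsupp.single i 1 + Finsupp.single k 1
          = Finsupp.single k 1 + Finsupp.single i 2 := by
        rw [← Finsupp.single_add, add_comm]
      rw [e]
      exact key_pair (Ne.symm hik)
  · by_cases hjk : j = k
    · subst hjk
      have e : Finsupp.single i 1 + Finsupp.single j 1 + Finsupp.single j 1
          = Finsupp.single i 1 + Finsupp.single j 2 := by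
        rw [add_assoc, ← Finsupp.single_add]
      rw [e]
      exact key_pair hij
    · by_cases hik : i = k
      · subst hik
        have e : Finsupp.single i 1 + Finsupp.single j 1 + Finsupp.single i 1
            = Finsupp.single j 1 + Finsupp.single i 2 := by
          rw [add_comm (Finsupp.single i 1) (Finsupp.single j 1), add_assoc, ← Finsupp.single_add]
        rw [e]
        exact key_pair (Ne.symm hij)
      · rw [rmap_fix (not_bad_triple hij hjk hik)]
        have hmem : i ∉ ({j, k} : Finset (Fin 6)) := by simp [hij, hik]
        have hmem2 : j ∉ ({k} : Finset (Fin 6)) := by simp [hjk]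
        refine ⟨by rw [CharTwo.add_self_eq_zero]; exact zero_mem _,
          ⟨Sum.inr (Sum.inr ⟨{i, j, k}, ?_⟩), ?_⟩⟩
        · rw [Finset.card_insert_of_notMem hmem, Finset.card_insert_of_notMem hmem2,
            Finset.card_singleton]
        · show _ = ∑ x ∈ ({i, j, k} : Finset (Fin 6)), Finsupp.single x 1
          rw [Finset.sum_insert hmem, Finset.sum_insert hmem2, Finset.sum_singleton, add_assoc]

/-! ### The linear map `psi` and the final assembly -/

noncomputable def eta : P6 →ₗ[ZMod 2] (Idx → ZMod 2) :=
  LinearMap.pi fun x => lcoeff (ZMod 2) (mu x)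

noncomputable def psi :
    (homogeneousSubmodule (Fin 6) (ZMod 2) 3) →ₗ[ZMod 2] (Idx → ZMod 2) :=
  (eta.comp rho).comp (Submodule.subtype _)

lemma rho_reduce {p : P6} (hp : p.IsHomogeneous 3) : p + rho p ∈ Wsub := by
  have e : p + rho p
      = ∑ d ∈ p.support, (monomial d (coeff d p) + monomial (rmap d) (coeff d p)) := by
    rw [Finset.sum_add_distrib, ← rho_as_sum]
    congr 1
    exact as_sum p
  rw [e]
  apply Submodule.sum_mem
  intro d hd
  have hdeg : d.degree = 3 := by
    rw [degree_eq_weight_one]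
    exact hp (MvPolynomial.mem_support_iff.mp hd)
  have e2 : (monomial d (coeff d p) + monomial (rmap d) (coeff d p) : P6)
      = (coeff d p) • (monomial d 1 + monomial (rmap d) 1) := by
    rw [smul_add, smul_monomial, smul_monomial, smul_eq_mul, mul_one]
  rw [e2]
  exact Submodule.smul_mem _ _ (key_d d hdeg).1

lemma W_le_ker_rho : Wsub ≤ LinearMap.ker rho := by
  apply Submodule.span_le.mpr
  rintro g ⟨i, j, rfl⟩
  simp only [SetLike.mem_coe, LinearMap.mem_ker]
  rcases eq_or_ne i j with rfl | hij
  · rw [show (X i * X i ^ 2 + X i ^ 2 * X i : P6) = X i ^ 3 + X i ^ 3 from by ring,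
      CharTwo.add_self_eq_zero, map_zero]
  · have e1 : (X i * X j ^ 2 : P6) = monomial (Finsupp.single i 1 + Finsupp.single j 2) 1 := by
      rw [monomial_single_add, pow_one, ← X_pow_eq_monomial]
    have e2 : (X i ^ 2 * X j : P6) = monomial (Finsupp.single j 1 + Finsupp.single i 2) 1 := by
      rw [monomial_single_add, pow_one, ← X_pow_eq_monomial]; ring
    rw [e1, e2, map_add, rho_monomial, rho_monomial]
    rcases lt_or_gt_of_ne hij with h | h
    · rw [rmap_fix (not_bad_good h), rmap_bad h, CharTwo.add_self_eq_zero]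
    · rw [rmap_bad h, rmap_fix (not_bad_good h), add_comm, CharTwo.add_self_eq_zero]

lemma rho_support {p : P6} (hp : p.IsHomogeneous 3) (e : Fin 6 →₀ ℕ)
    (he : coeff e (rho p) ≠ 0) : ∃ x : Idx, e = mu x := by
  rw [rho_as_sum, coeff_sum] at he
  obtain ⟨d, hd, hcd⟩ := Finset.exists_ne_zero_of_sum_ne_zero he
  rw [coeff_monomial] at hcd
  have hre : rmap d = e := by
    by_contra hc
    rw [if_neg hc] at hcd
    exact hcd rfl
  have hdeg : d.degree = 3 := by
    rw [degree_eq_weight_one]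
    exact hp (MvPolynomial.mem_support_iff.mp hd)
  obtain ⟨x, hx⟩ := (key_d d hdeg).2
  exact ⟨x, by rw [← hre, hx]⟩

lemma hker_psi :
    LinearMap.ker psi
      = (hitSub 6 3).comap (homogeneousSubmodule (Fin 6) (ZMod 2) 3).subtype := by
  ext p
  simp only [LinearMap.mem_ker, Submodule.mem_comap, Submodule.coe_subtype, hit_eq_W]
  constructor
  · intro h
    have hhom : (p : P6).IsHomogeneous 3 := (mem_homogeneousSubmodule _ _).mp p.2
    have hr : rho (p : P6) = 0 := by
      apply MvPolynomial.ext
      intro e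
      rw [coeff_zero]
      by_contra hc
      obtain ⟨x, rfl⟩ := rho_support hhom e hc
      have := congrFun (show eta (rho (p : P6)) = 0 from h) x
      exact hc this
    have := rho_reduce hhom
    rwa [hr, add_zero] at this
  · intro h
    show eta (rho (p : P6)) = 0
    rw [show rho (p : P6) = 0 from W_le_ker_rho h, map_zero]

lemma psi_single (x : Idx) :
    psi ⟨monomial (mu x) 1, (mem_homogeneousSubmodule _ _).mpr
      (isHomogeneous_monomial 1 (mu_degree x))⟩ = Pi.single x 1 := by
  funext y
  show coeff (mu y) (rho (monomial (mu x) 1)) = _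
  rw [rho_monomial, rmap_mu, coeff_monomial, Pi.single_apply]
  by_cases hxy : x = y
  · subst hxy; rw [if_pos rfl, if_pos rfl]
  · rw [if_neg (fun hc => hxy (mu_inj hc)), if_neg (Ne.symm hxy)]

lemma psi_surj : Function.Surjective psi := by
  rw [← LinearMap.range_eq_top, ← top_le_iff, ← (Pi.basisFun (ZMod 2) Idx).span_eq]
  apply Submodule.span_le.mpr
  rintro g ⟨x, rfl⟩
  have : (Pi.basisFun (ZMod 2) Idx) x = Pi.single x 1 := by
    simp [Pi.basisFun_apply]
  rw [this, ← psi_single x]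
  exact LinearMap.mem_range_self _ _

lemma card_Idx : Fintype.card Idx = 41 := by
  rw [Fintype.card_sum, Fintype.card_sum]
  norm_num [Fintype.card_subtype]
  decide

end QPaux

theorem dim_QP_6_3 : Module.finrank (ZMod 2) (QP 6 3) = 41 := by
  have e : QP 6 3 ≃ₗ[ZMod 2] (QPaux.Idx → ZMod 2) :=
    (Submodule.quotEquivOfEq _ _ QPaux.hker_psi.symm).trans
      (QPaux.psi.quotKerEquivOfSurjective QPaux.psi_surj)
  rw [e.finrank_eq, Module.finrank_pi, QPaux.card_Idx]
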